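/- arXiv:2505.00782 — 3 statements merged into one kernel-verified Lean document; each statement's English description precedes it below -/
import Mathlib

section
/- Let n, p ≥ 1, let t₀ ≤ t_f be real numbers, and let A : ℝ → ℝ^{n×n} and B : ℝ → ℝ^{n×p} be continuous on [t₀, t_f]. Suppose s : ℝ → ℝ^{n×p} is differentiable on [t₀, t_f] and satisfies the variational (sensitivity) equation s'(t) = A(t)·s(t) + B(t), and a : ℝ → ℝⁿ is differentiable on [t₀, t_f] and satisfies the adjoint equation a'(t) = −A(t)ᵀ·a(t). Then for every t ∈ [t₀, t_f], the derivative of the map t ↦ a(t)ᵀ·s(t) ∈ ℝ^{1×p} equals a(t)ᵀ·B(t); that is, d/dt (a(t)ᵀ s(t)) = a(t)ᵀ B(t). -/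
attribute [local instance] Matrix.normedAddCommGroup Matrix.normedSpace

/-- If `s` solves the variational equation `s' = A s + B` and `a` solves the adjoint
equation `a' = −Aᵀ a` on `[t₀, t_f]`, then `d/dt (aᵀ s) = aᵀ B` on `[t₀, t_f]`. -/
theorem stmt_7 (n p : ℕ) (hn : 1 ≤ n) (hp : 1 ≤ p) (t₀ tf : ℝ) (ht : t₀ ≤ tf)
    (A : ℝ → Matrix (Fin n) (Fin n) ℝ) (B : ℝ → Matrix (Fin n) (Fin p) ℝ)
    (hA : ContinuousOn A (Set.Icc t₀ tf)) (hB : ContinuousOn B (Set.Icc t₀ tf))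
    (s : ℝ → Matrix (Fin n) (Fin p) ℝ)
    (hs : ∀ t ∈ Set.Icc t₀ tf, HasDerivWithinAt s (A t * s t + B t) (Set.Icc t₀ tf) t)
    (a : ℝ → Fin n → ℝ)
    (ha : ∀ t ∈ Set.Icc t₀ tf,
      HasDerivWithinAt a (-(Matrix.mulVec (Matrix.transpose (A t)) (a t))) (Set.Icc t₀ tf) t) :
    ∀ t ∈ Set.Icc t₀ tf,
      HasDerivWithinAt (fun τ => Matrix.vecMul (a τ) (s τ))
        (Matrix.vecMul (a t) (B t)) (Set.Icc t₀ tf) t := by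
  intro t htm
  have hst := hs t htm
  have hat := ha t htm
  rw [hasDerivWithinAt_pi]
  intro j
  have hkey : ∀ i : Fin n, HasDerivWithinAt (fun τ => a τ i * s τ i j)
      ((-(Matrix.mulVec (Matrix.transpose (A t)) (a t))) i * s t i j
        + a t i * ((A t * s t + B t) i j)) (Set.Icc t₀ tf) t := by
    intro i
    have hai : HasDerivWithinAt (fun τ => a τ i)
        ((-(Matrix.mulVec (Matrix.transpose (A t)) (a t))) i) (Set.Icc t₀ tf) t :=
      hasDerivWithinAt_pi.1 hat i
    have hsij : HasDerivWithinAt (fun τ => s τ i j)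
        ((A t * s t + B t) i j) (Set.Icc t₀ tf) t :=
      hasDerivWithinAt_pi.1 (hasDerivWithinAt_pi.1 hst i) j
    exact hai.mul hsij
  have hsum := HasDerivWithinAt.fun_sum (u := Finset.univ)
    (fun i _ => hkey i)
  have heq : ∑ i : Fin n, ((-(Matrix.mulVec (Matrix.transpose (A t)) (a t))) i * s t i j
        + a t i * ((A t * s t + B t) i j)) = Matrix.vecMul (a t) (B t) j := by
    simp only [Matrix.mulVec, Matrix.vecMul, Matrix.add_apply, Matrix.mul_apply,
      Matrix.transpose_apply, dotProduct, Pi.neg_apply, neg_mul, mul_add,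
      Finset.sum_add_distrib, Finset.sum_neg_distrib, Finset.sum_mul, Finset.mul_sum]
    rw [Finset.sum_comm (f := fun i k => A t k i * a t k * s t i j)]
    ring_nf
    have h2 : ∑ x : Fin n, ∑ y : Fin n, A t x y * a t x * s t y j
        = ∑ x : Fin n, ∑ y : Fin n, a t x * A t x y * s t y j := by
      refine Finset.sum_congr rfl fun x _ => Finset.sum_congr rfl fun y _ => by ring
    rw [h2]
    ring
  have : (fun τ => Matrix.vecMul (a τ) (s τ) j)
      = fun τ => ∑ i : Fin n, a τ i * s τ i j := by
    funext τ
    simp [Matrix.vecMul, dotProduct]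
  rw [this, ← heq]
  exact hsum
end

section
/- Let n, p ≥ 1, let t₀ ≤ t_f be real numbers, and let A : ℝ → ℝ^{n×n} and B : ℝ → ℝ^{n×p} be continuous on [t₀, t_f]. Suppose s : ℝ → ℝ^{n×p} is differentiable on [t₀, t_f] with s(t₀) = 0 and s'(t) = A(t)·s(t) + B(t) for all t ∈ [t₀, t_f], and a : ℝ → ℝⁿ is differentiable on [t₀, t_f] with a'(t) = −A(t)ᵀ·a(t) for all t ∈ [t₀, t_f]. Then a(t_f)ᵀ·s(t_f) = ∫_{t₀}^{t_f} a(t)ᵀ·B(t) dt (an identity in ℝ^{1×p}). -/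
attribute [local instance] Matrix.normedAddCommGroup Matrix.normedSpace

/-- If `s` solves the variational equation `s' = A s + B` on `[t₀, t_f]` with `s(t₀) = 0`
and `a` solves the adjoint equation `a' = −Aᵀ a`, then
`a(t_f)ᵀ s(t_f) = ∫_{t₀}^{t_f} a(t)ᵀ B(t) dt`. -/
theorem stmt_8 (n p : ℕ) (hn : 1 ≤ n) (hp : 1 ≤ p) (t₀ tf : ℝ) (ht : t₀ ≤ tf)
    (A : ℝ → Matrix (Fin n) (Fin n) ℝ) (B : ℝ → Matrix (Fin n) (Fin p) ℝ)
    (hA : ContinuousOn A (Set.Icc t₀ tf)) (hB : ContinuousOn B (Set.Icc t₀ tf))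
    (s : ℝ → Matrix (Fin n) (Fin p) ℝ) (hs0 : s t₀ = 0)
    (hs : ∀ t ∈ Set.Icc t₀ tf, HasDerivWithinAt s (A t * s t + B t) (Set.Icc t₀ tf) t)
    (a : ℝ → Fin n → ℝ)
    (ha : ∀ t ∈ Set.Icc t₀ tf,
      HasDerivWithinAt a (-(Matrix.mulVec (Matrix.transpose (A t)) (a t)))
        (Set.Icc t₀ tf) t) :
    Matrix.vecMul (a tf) (s tf) = ∫ t in t₀..tf, Matrix.vecMul (a t) (B t) := by
  have key : ∀ t ∈ Set.Icc t₀ tf, HasDerivWithinAt (fun t => Matrix.vecMul (a t) (s t))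
      (Matrix.vecMul (a t) (B t)) (Set.Icc t₀ tf) t := by
    intro t ht'
    rw [hasDerivWithinAt_pi]
    intro j
    have haj : ∀ i, HasDerivWithinAt (fun t => a t i)
        ((-(Matrix.mulVec (Matrix.transpose (A t)) (a t))) i) (Set.Icc t₀ tf) t :=
      hasDerivWithinAt_pi.mp (ha t ht')
    have hsij : ∀ i, HasDerivWithinAt (fun t => s t i j)
        ((A t * s t + B t) i j) (Set.Icc t₀ tf) t := by
      intro i
      exact hasDerivWithinAt_pi.mp (hasDerivWithinAt_pi.mp (hs t ht') i) j
    have hsum : HasDerivWithinAt (fun t => ∑ i, a t i * s t i j)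
        (∑ i, ((-(Matrix.mulVec (Matrix.transpose (A t)) (a t))) i * s t i j
          + a t i * (A t * s t + B t) i j)) (Set.Icc t₀ tf) t :=
      HasDerivWithinAt.fun_sum fun i _ => (haj i).mul (hsij i)
    refine hsum.congr_deriv (Eq.symm ?_)
    simp only [Matrix.vecMul, dotProduct, Matrix.mulVec, Matrix.transpose_apply,
      Matrix.add_apply, Matrix.mul_apply, Pi.neg_apply, neg_mul, mul_add,
      Finset.sum_add_distrib, Finset.sum_mul, Finset.mul_sum]
    rw [Finset.sum_comm]
    have h0 : ∑ y : Fin n, ∑ x : Fin n, a t x * (A t x y * s t y j)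
        = ∑ y : Fin n, ∑ x : Fin n, A t x y * a t x * s t y j :=
      Finset.sum_congr rfl fun y _ => Finset.sum_congr rfl fun x _ => by ring
    rw [h0, Finset.sum_neg_distrib]
    ring
  have hac : ContinuousOn a (Set.Icc t₀ tf) := fun t ht' => (ha t ht').continuousWithinAt
  have hcont : ContinuousOn (fun t => Matrix.vecMul (a t) (s t)) (Set.Icc t₀ tf) :=
    fun t ht' => (key t ht').continuousWithinAt
  have hgB : ContinuousOn (fun t => Matrix.vecMul (a t) (B t)) (Set.Icc t₀ tf) :=
    continuousOn_iff_continuous_restrict.mpr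
      ((continuousOn_iff_continuous_restrict.mp hac).matrix_vecMul
        (continuousOn_iff_continuous_restrict.mp hB))
  have hint : IntervalIntegrable (fun t => Matrix.vecMul (a t) (B t))
      MeasureTheory.volume t₀ tf := by
    apply ContinuousOn.intervalIntegrable
    rwa [Set.uIcc_of_le ht]
  have hderiv : ∀ x ∈ Set.Ioo t₀ tf, HasDerivWithinAt (fun t => Matrix.vecMul (a t) (s t))
      (Matrix.vecMul (a x) (B x)) (Set.Ioi x) x := by
    intro x hx
    exact (((key x (Set.Ioo_subset_Icc_self hx)).hasDerivAt
      (Icc_mem_nhds hx.1 hx.2)).hasDerivWithinAt)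
  have := intervalIntegral.integral_eq_sub_of_hasDeriv_right_of_le ht hcont hderiv hint
  rw [this, hs0, Matrix.vecMul_zero, sub_zero]
end

section
/- Let n, p ≥ 1, let t₀ ≤ t_f be real numbers, and let A : ℝ → ℝ^{n×n} and B : ℝ → ℝ^{n×p} be continuous on [t₀, t_f]. Let X : ℝᵖ → ℝⁿ be a map (the final state of the trajectory as a function of the parameter vector μ) that is differentiable at μ₀ ∈ ℝᵖ, and suppose its derivative DX(μ₀) ∈ ℝ^{n×p} equals s(t_f), where s : ℝ → ℝ^{n×p} is differentiable on [t₀, t_f] with s(t₀) = 0 and s'(t) = A(t)·s(t) + B(t). Let L : ℝⁿ → ℝ be differentiable at X(μ₀), and let a : ℝ → ℝⁿ be differentiable on [t₀, t_f] with a'(t) = −A(t)ᵀ·a(t) and terminal condition a(t_f) = ∇L(X(μ₀)). Then the composite loss F = L ∘ X : ℝᵖ → ℝ is differentiable at μ₀ and its gradient satisfies ∇F(μ₀)ᵀ = ∫_{t₀}^{t_f} a(t)ᵀ·B(t) dt. -/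
attribute [local instance] Matrix.normedAddCommGroup Matrix.normedSpace

/-- Adjoint sensitivity method: if the final state `X(μ)` of the trajectory is differentiable
at `μ₀` with derivative given by the sensitivity matrix `s(t_f)` (where `s' = A s + B`,
`s(t₀) = 0`), the loss `L` is differentiable at `X(μ₀)`, and the adjoint state `a` solves
`a' = −Aᵀ a` with terminal condition `a(t_f) = ∇L(X(μ₀))`, then the composite loss
`F = L ∘ X` is differentiable at `μ₀` with gradient `∇F(μ₀)ᵀ = ∫_{t₀}^{t_f} a(t)ᵀ B(t) dt`. -/
theorem stmt_9 (n p : ℕ) (hn : 1 ≤ n) (hp : 1 ≤ p) (t₀ tf : ℝ) (ht : t₀ ≤ tf)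
    (A : ℝ → Matrix (Fin n) (Fin n) ℝ) (B : ℝ → Matrix (Fin n) (Fin p) ℝ)
    (hA : ContinuousOn A (Set.Icc t₀ tf)) (hB : ContinuousOn B (Set.Icc t₀ tf))
    (s : ℝ → Matrix (Fin n) (Fin p) ℝ) (hs0 : s t₀ = 0)
    (hs : ∀ t ∈ Set.Icc t₀ tf, HasDerivWithinAt s (A t * s t + B t) (Set.Icc t₀ tf) t)
    (X : (Fin p → ℝ) → (Fin n → ℝ)) (μ₀ : Fin p → ℝ)
    (hX : DifferentiableAt ℝ X μ₀)
    (hDX : ∀ v, fderiv ℝ X μ₀ v = Matrix.mulVec (s tf) v)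
    (L : (Fin n → ℝ) → ℝ) (hL : DifferentiableAt ℝ L (X μ₀))
    (a : ℝ → Fin n → ℝ)
    (ha : ∀ t ∈ Set.Icc t₀ tf,
      HasDerivWithinAt a (-(Matrix.mulVec (Matrix.transpose (A t)) (a t)))
        (Set.Icc t₀ tf) t)
    (haf : a tf = fun i => fderiv ℝ L (X μ₀) (Pi.single i 1)) :
    DifferentiableAt ℝ (fun μ => L (X μ)) μ₀ ∧
      (fun j => fderiv ℝ (fun μ => L (X μ)) μ₀ (Pi.single j 1)) =
        ∫ t in t₀..tf, Matrix.vecMul (a t) (B t) := by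
  refine ⟨hL.comp μ₀ hX, ?_⟩
  -- component derivatives of a and s
  have haij : ∀ t ∈ Set.Icc t₀ tf, ∀ i, HasDerivWithinAt (fun t => a t i)
      ((-(Matrix.mulVec (Matrix.transpose (A t)) (a t))) i) (Set.Icc t₀ tf) t := by
    intro t htI i
    exact (hasDerivWithinAt_pi.1 (ha t htI)) i
  have hsij : ∀ t ∈ Set.Icc t₀ tf, ∀ i j, HasDerivWithinAt (fun t => s t i j)
      ((A t * s t + B t) i j) (Set.Icc t₀ tf) t := by
    intro t htI i j
    have h1 : HasDerivWithinAt (fun t => s t i) ((A t * s t + B t) i) (Set.Icc t₀ tf) t :=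
      (hasDerivWithinAt_pi.1 (hs t htI)) i
    exact (hasDerivWithinAt_pi.1 h1) j
  -- the function g t = a t ᵥ* s t
  set g : ℝ → Fin p → ℝ := fun t => Matrix.vecMul (a t) (s t) with hgdef
  have hg : ∀ t ∈ Set.Icc t₀ tf,
      HasDerivWithinAt g (Matrix.vecMul (a t) (B t)) (Set.Icc t₀ tf) t := by
    intro t htI
    rw [hasDerivWithinAt_pi]
    intro j
    have hcomp : ∀ x, g x j = ∑ i, a x i * s x i j := by
      intro x
      simp [hgdef, Matrix.vecMul, dotProduct]
    have hsum : HasDerivWithinAt (fun x => ∑ i, a x i * s x i j)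
        (∑ i, ((-(Matrix.mulVec (Matrix.transpose (A t)) (a t))) i * s t i j
          + a t i * (A t * s t + B t) i j)) (Set.Icc t₀ tf) t := by
      apply HasDerivWithinAt.fun_sum
      intro i _
      exact (haij t htI i).mul (hsij t htI i j)
    have key : (∑ i, ((-(Matrix.mulVec (Matrix.transpose (A t)) (a t))) i * s t i j
          + a t i * (A t * s t + B t) i j)) = Matrix.vecMul (a t) (B t) j := by
      simp only [Pi.neg_apply, Matrix.mulVec, Matrix.vecMul, dotProduct,
        Matrix.add_apply, Matrix.mul_apply, Matrix.transpose_apply]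
      rw [Finset.sum_add_distrib]
      have h1 : ∑ i, -(∑ k, A t k i * a t k) * s t i j
          = -∑ i, ∑ k, A t k i * a t k * s t i j := by
        rw [← Finset.sum_neg_distrib]
        congr 1; ext i; rw [neg_mul, Finset.sum_mul]
      have h2 : ∑ i, a t i * (∑ k, A t i k * s t k j + B t i j)
          = (∑ i, ∑ k, a t i * (A t i k * s t k j)) + ∑ i, a t i * B t i j := by
        rw [← Finset.sum_add_distrib]
        congr 1; ext i; rw [mul_add, Finset.mul_sum]
      rw [h1, h2]
      have h3 : ∑ i, ∑ k, A t k i * a t k * s t i j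
          = ∑ i, ∑ k, a t i * (A t i k * s t k j) := by
        rw [Finset.sum_comm]
        congr 1; ext i; congr 1; ext k; ring
      rw [h3]; ring
    have := hsum.congr (fun x _ => (hcomp x)) (hcomp t)
    rw [← key]
    exact this
  -- continuity of the integrand
  have hacont : ContinuousOn a (Set.Icc t₀ tf) := fun t htI =>
    (ha t htI).continuousWithinAt
  have hscont : ContinuousOn s (Set.Icc t₀ tf) := fun t htI =>
    (hs t htI).continuousWithinAt
  have hintcont : ContinuousOn (fun t => Matrix.vecMul (a t) (B t)) (Set.Icc t₀ tf) := by
    apply continuousOn_pi.2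
    intro j
    have : ∀ x, Matrix.vecMul (a x) (B x) j = ∑ i, a x i * B x i j := by
      intro x; simp [Matrix.vecMul, dotProduct]
    refine ContinuousOn.congr ?_ (fun x _ => this x)
    apply continuousOn_finset_sum
    intro i _
    exact ((continuousOn_pi.1 hacont) i).mul
      (((continuousOn_pi.1 ((continuousOn_pi.1 hB) i)) j))
  have hgcont : ContinuousOn g (Set.Icc t₀ tf) := fun t htI =>
    (hg t htI).continuousWithinAt
  have hint : IntervalIntegrable (fun t => Matrix.vecMul (a t) (B t))
      MeasureTheory.volume t₀ tf := by
    apply ContinuousOn.intervalIntegrable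
    rwa [Set.uIcc_of_le ht]
  -- FTC
  have hftc : (∫ t in t₀..tf, Matrix.vecMul (a t) (B t)) = g tf - g t₀ := by
    apply intervalIntegral.integral_eq_sub_of_hasDeriv_right_of_le ht hgcont ?_ hint
    intro x hx
    exact ((hg x (Set.mem_Icc_of_Ioo hx)).hasDerivAt
      (Icc_mem_nhds hx.1 hx.2)).hasDerivWithinAt
  have hg0 : g t₀ = 0 := by simp [hgdef, hs0]
  rw [hftc, hg0, sub_zero]
  -- chain rule
  have hfd : fderiv ℝ (fun μ => L (X μ)) μ₀
      = (fderiv ℝ L (X μ₀)).comp (fderiv ℝ X μ₀) := by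
    exact fderiv_comp μ₀ hL hX
  funext j
  rw [hfd]
  simp only [ContinuousLinearMap.coe_comp', Function.comp_apply]
  rw [hDX]
  have hv : Matrix.mulVec (s tf) (Pi.single j 1) = fun i => s tf i j := by
    ext i; simp [Matrix.mulVec_single]
  rw [hv]
  have hdec : (fun i => s tf i j) = ∑ i : Fin n, (s tf i j) • (Pi.single i 1 : Fin n → ℝ) :=
    by funext k
       rw [Finset.sum_apply]
       simp [Pi.single_apply]
  rw [hdec, map_sum]
  simp only [map_smul]
  have : Matrix.vecMul (a tf) (s tf) j = ∑ i, a tf i * s tf i j := by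
    simp [Matrix.vecMul, dotProduct]
  simp only [hgdef, this, haf, smul_eq_mul]
  congr 1; ext i; ring
end
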